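/- arXiv:2211.09377 — 5 statements merged into one kernel-verified Lean document; each statement's English description precedes it below -/
import Mathlib

section
/- The automorphism σ induces an R-algebra automorphism σ̄ of the quotient A/J (so that σ̄(a + J) = σ(a) + J), and the R-algebra homomorphism from A^σ/(J ∩ A^σ) to the fixed-point subalgebra (A/J)^{σ̄} induced by the inclusion A^σ ↪ A followed by the quotient map is an isomorphism; in particular, the fixed-point subalgebra of A/J under σ̄ is isomorphic to the quotient of the fixed-point subalgebra A^σ by the ideal J ∩ A^σ. -/
variable {R : Type*} [CommRing R] {A : Type*} [Ring A] [Algebra R A]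

/-- The quotient of `A` by the two-sided ideal `J`, as a ring. -/
abbrev TwoSidedIdeal.Quot (J : TwoSidedIdeal A) : Type _ := J.ringCon.Quotient

/-- The `R`-algebra structure on the quotient `A/J`. -/
noncomputable instance (J : TwoSidedIdeal A) : Algebra R J.Quot :=
  RingHom.toAlgebra' ((RingCon.mk' J.ringCon).comp (algebraMap R A)) (by
    intro r x
    induction x using Quotient.inductionOn' with
    | h a =>
      show ((algebraMap R A r : A) : J.ringCon.Quotient) * (a : J.ringCon.Quotient)
          = (a : J.ringCon.Quotient) * ((algebraMap R A r : A) : J.ringCon.Quotient)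
      rw [← RingCon.coe_mul, ← RingCon.coe_mul, Algebra.commutes])

/-- `σ` induces an automorphism `σ̄` of `A/J` with
`σ̄(a + J) = σ(a) + J` (and such `σ̄` is unique), and the map `A^σ → (A/J)^σ̄`
obtained by restricting the quotient map has image exactly the `σ̄`-fixed points
and kernel exactly `J ∩ A^σ`; hence `A^σ/(J ∩ A^σ) ≅ (A/J)^σ̄`. -/
theorem fixedPoints_quotient_iso
    (p : ℕ) (hp : 0 < p) (hpR : IsUnit (p : R))
    (σ : A ≃ₐ[R] A) (hσ : σ ^ p = 1)
    (J : TwoSidedIdeal A) (hJ : ∀ x : A, x ∈ J ↔ σ x ∈ J) :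
    ∃ σbar : J.Quot ≃ₐ[R] J.Quot,
      (∀ a : A, σbar ((a : J.ringCon.Quotient)) = ((σ a : A) : J.ringCon.Quotient)) ∧
      (∀ τ : J.Quot ≃ₐ[R] J.Quot,
        (∀ a : A, τ ((a : J.ringCon.Quotient)) = ((σ a : A) : J.ringCon.Quotient)) →
          τ = σbar) ∧
      (Set.range (fun x : {a : A // σ a = a} => ((x : A) : J.ringCon.Quotient))
        = {y : J.Quot | σbar y = y}) ∧
      (∀ x : {a : A // σ a = a}, ((x : A) : J.ringCon.Quotient) = 0 ↔ (x : A) ∈ J) := by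
  have key : ∀ a b : A, J.ringCon a b → J.ringCon (σ a) (σ b) := by
    intro a b h
    rw [TwoSidedIdeal.rel_iff] at h ⊢
    rw [← map_sub]
    exact (hJ _).1 h
  have key' : ∀ a b : A, J.ringCon a b → J.ringCon (σ.symm a) (σ.symm b) := by
    intro a b h
    rw [TwoSidedIdeal.rel_iff] at h ⊢
    rw [← map_sub, hJ]
    simpa using h
  let σbar : J.Quot ≃ₐ[R] J.Quot :=
    { toFun := Quotient.map' σ key
      invFun := Quotient.map' σ.symm key'
      left_inv := by
        intro x
        induction x using Quotient.inductionOn' with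
        | h a => exact congrArg (fun z : A => (z : J.ringCon.Quotient)) (σ.symm_apply_apply a)
      right_inv := by
        intro x
        induction x using Quotient.inductionOn' with
        | h a => exact congrArg (fun z : A => (z : J.ringCon.Quotient)) (σ.apply_symm_apply a)
      map_mul' := by
        intro x y
        induction x using Quotient.inductionOn' with
        | h a =>
          induction y using Quotient.inductionOn' with
          | h b => exact congrArg (fun z : A => (z : J.ringCon.Quotient)) (map_mul σ a b)
      map_add' := by
        intro x y
        induction x using Quotient.inductionOn' with
        | h a =>
          induction y using Quotient.inductionOn' with
          | h b => exact congrArg (fun z : A => (z : J.ringCon.Quotient)) (map_add σ a b)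
      commutes' := by
        intro r
        exact congrArg (fun z : A => (z : J.ringCon.Quotient)) (σ.commutes r) }
  have hbar : ∀ a : A, σbar ((a : J.ringCon.Quotient)) = ((σ a : A) : J.ringCon.Quotient) :=
    fun _ => rfl
  -- σ^n preserves J
  have hJn : ∀ (n : ℕ) (x : A), x ∈ J → (σ ^ n) x ∈ J := by
    intro n
    induction n with
    | zero => intro x hx; simpa using hx
    | succ n ih =>
      intro x hx
      rw [pow_succ', AlgEquiv.mul_apply]
      exact (hJ _).1 (ih x hx)
  refine ⟨σbar, hbar, ?_, ?_, ?_⟩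
  · intro τ hτ
    ext x
    induction x using Quotient.inductionOn' with
    | h a => exact (hτ a).trans (hbar a).symm
  · ext y
    constructor
    · rintro ⟨x, rfl⟩
      show σbar _ = _
      rw [hbar, x.2]
    · intro hy
      obtain ⟨a, rfl⟩ := Quotient.exists_rep y
      have ha : σ a - a ∈ J := by
        have : ((σ a : A) : J.ringCon.Quotient) = ((a : A) : J.ringCon.Quotient) :=
          (hbar a).symm.trans hy
        rw [RingCon.eq, TwoSidedIdeal.rel_iff] at this
        exact this
      -- σ^i a - a ∈ J
      have hia : ∀ i : ℕ, (σ ^ i) a - a ∈ J := by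
        intro i
        induction i with
        | zero => simpa using J.zero_mem
        | succ n ih =>
          have h1 : (σ ^ (n + 1)) a - (σ ^ n) a ∈ J := by
            have e : (σ ^ (n + 1)) a - (σ ^ n) a = (σ ^ n) (σ a - a) := by
              rw [map_sub, pow_succ, AlgEquiv.mul_apply]
            rw [e]
            exact hJn n _ ha
          have := J.add_mem h1 ih
          simpa [sub_add_sub_cancel] using this
      set s : A := ∑ i ∈ Finset.range p, (σ ^ i) a with hs
      have hσs : σ s = s := by
        have e1 : σ s = ∑ i ∈ Finset.range p, (σ ^ (i + 1)) a := by
          rw [hs, map_sum]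
          refine Finset.sum_congr rfl fun i _ => ?_
          rw [pow_succ', AlgEquiv.mul_apply]
        have e2 : ∑ i ∈ Finset.range p, (σ ^ (i + 1)) a + (σ ^ 0) a
            = ∑ i ∈ Finset.range p, (σ ^ i) a + (σ ^ p) a :=
          (Finset.sum_range_succ' (fun i => (σ ^ i) a) p).symm.trans
            (Finset.sum_range_succ (fun i => (σ ^ i) a) p)
        have e3 : (σ ^ p) a = (σ ^ 0) a := by rw [hσ, pow_zero]
        rw [e3] at e2
        have := add_right_cancel e2
        rw [e1, this]
      have hsu : s - p • a ∈ J := by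
        have e : s - p • a = ∑ i ∈ Finset.range p, ((σ ^ i) a - a) := by
          rw [Finset.sum_sub_distrib, Finset.sum_const, Finset.card_range]
        rw [e]
        exact J.finsetSum_mem _ _ fun i _ => hia i
      set u := hpR.unit with hu
      set b : A := ((u⁻¹ : Rˣ) : R) • s with hb
      have hσb : σ b = b := by rw [hb, map_smul, hσs]
      have hba : b - a ∈ J := by
        have e : b - a = ((u⁻¹ : Rˣ) : R) • (s - p • a) := by
          rw [smul_sub, ← hb]
          congr 1
          rw [← Nat.cast_smul_eq_nsmul R p a, smul_smul]
          have : ((u⁻¹ : Rˣ) : R) * (p : R) = 1 := by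
            rw [show ((p : R)) = (u : R) from (hpR.unit_spec).symm, Units.inv_mul]
          rw [this, one_smul]
        rw [e, Algebra.smul_def]
        exact J.mul_mem_left _ _ hsu
      refine ⟨⟨b, hσb⟩, ?_⟩
      show ((b : A) : J.ringCon.Quotient) = _
      rw [show (Quotient.mk _ a : J.Quot) = ((a : A) : J.ringCon.Quotient) from rfl]
      rw [RingCon.eq, TwoSidedIdeal.rel_iff]
      exact hba
  · intro x
    rw [show (0 : J.Quot) = ((0 : A) : J.ringCon.Quotient) from rfl, RingCon.eq,
      TwoSidedIdeal.rel_iff, sub_zero]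
end

section
/- There exists a unique R-algebra automorphism σ of H(r,1,n) such that σ(T_0) = ζT_0 and σ(T_i) = T_i for all 1 ≤ i ≤ n−1, and it satisfies σ^p = id. -/
variable (R : Type*) [CommRing R]

/-- The `i`-th generator `T_i` of the free algebra on `T_0, …, T_{n-1}`
(or `0` if `i ≥ n`). -/
def fgen (n : ℕ) (i : ℕ) : FreeAlgebra R (Fin n) :=
  if h : i < n then FreeAlgebra.ι R (⟨i, h⟩ : Fin n) else 0

/-- Scalar as an element of the free algebra. -/
def fconst (n : ℕ) (c : R) : FreeAlgebra R (Fin n) :=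
  algebraMap R (FreeAlgebra R (Fin n)) c

/-- The defining relations of the cyclotomic Hecke algebra `H(r,1,n)`:
`rel a b` holds when `a` is one of the defining relators and `b = 0`. -/
def heckeRel (n r : ℕ) (q : R) (v : Fin r → R) :
    FreeAlgebra R (Fin n) → FreeAlgebra R (Fin n) → Prop :=
  fun a b => b = 0 ∧
    (a = (List.ofFn (fun k : Fin r => fgen R n 0 - fconst R n (v k))).prod ∨
     (∃ i : ℕ, 1 ≤ i ∧ i ≤ n - 1 ∧
        a = (fgen R n i - fconst R n q) * (fgen R n i + 1)) ∨
     a = fgen R n 0 * fgen R n 1 * fgen R n 0 * fgen R n 1 -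
         fgen R n 1 * fgen R n 0 * fgen R n 1 * fgen R n 0 ∨
     (∃ i : ℕ, 1 ≤ i ∧ i + 1 ≤ n - 1 ∧
        a = fgen R n i * fgen R n (i + 1) * fgen R n i -
            fgen R n (i + 1) * fgen R n i * fgen R n (i + 1)) ∨
     (∃ i j : ℕ, j ≤ n - 1 ∧ i + 2 ≤ j ∧
        a = fgen R n i * fgen R n j - fgen R n j * fgen R n i))

/-- The cyclotomic Hecke algebra `H(r,1,n)`: the quotient of the free algebra on
`T_0, …, T_{n-1}` by the two-sided ideal generated by the defining relators. -/
def Hecke (n r : ℕ) (q : R) (v : Fin r → R) : Type _ :=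
  RingQuot (heckeRel R n r q v)

noncomputable instance (n r : ℕ) (q : R) (v : Fin r → R) : Ring (Hecke R n r q v) :=
  inferInstanceAs (Ring (RingQuot (heckeRel R n r q v)))

noncomputable instance (n r : ℕ) (q : R) (v : Fin r → R) :
    Algebra R (Hecke R n r q v) :=
  inferInstanceAs (Algebra R (RingQuot (heckeRel R n r q v)))

/-- The generator `T_i` of `H(r,1,n)`. -/
noncomputable def Tgen (n r : ℕ) (q : R) (v : Fin r → R) (i : ℕ) : Hecke R n r q v :=
  RingQuot.mkAlgHom R (heckeRel R n r q v) (fgen R n i)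

-- ===== auxiliary development =====
open Polynomial

lemma heckePolyInv (r : ℕ) (ζ ζ' : R) (hz : ζ * ζ' = 1) (v : Fin r → R)
    (hinv : ∏ k : Fin r, (X - C (ζ * v k)) = ∏ k : Fin r, (X - C (v k))) (m : ℕ) :
    ∏ k : Fin r, (X - C (ζ ^ m * v k)) = ∏ k : Fin r, (X - C (v k)) := by
  induction m with
  | zero => simp
  | succ m ih =>
    have key : ∀ w : Fin r → R,
        (C ζ) ^ r * Polynomial.aeval (C ζ' * X : R[X]) (∏ k : Fin r, (X - C (w k)))
          = ∏ k : Fin r, (X - C (ζ * w k)) := by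
      intro w
      rw [map_prod, ← Fin.prod_const r (C ζ), ← Finset.prod_mul_distrib]
      refine Finset.prod_congr rfl fun k _ => ?_
      rw [map_sub, aeval_X, aeval_C, mul_sub, ← mul_assoc, ← C_mul, hz, C_1, one_mul,
        Polynomial.algebraMap_eq, ← C_mul]
    calc ∏ k : Fin r, (X - C (ζ ^ (m + 1) * v k))
        = ∏ k : Fin r, (X - C (ζ * (ζ ^ m * v k))) := by
          refine Finset.prod_congr rfl fun k _ => ?_
          rw [← mul_assoc, ← pow_succ']
      _ = (C ζ) ^ r * Polynomial.aeval (C ζ' * X : R[X])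
            (∏ k : Fin r, (X - C (ζ ^ m * v k))) := (key _).symm
      _ = (C ζ) ^ r * Polynomial.aeval (C ζ' * X : R[X])
            (∏ k : Fin r, (X - C (v k))) := by rw [ih]
      _ = ∏ k : Fin r, (X - C (ζ * v k)) := key _
      _ = ∏ k : Fin r, (X - C (v k)) := hinv

lemma listSmulProd {A : Type*} [Ring A] [Algebra R A] (c : R) :
    ∀ (r : ℕ) (f : Fin r → A),
      (List.ofFn fun k => c • f k).prod = c ^ r • (List.ofFn f).prod := by
  intro r
  induction r with
  | zero => intro f; simp
  | succ m ih =>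
    intro f
    rw [List.ofFn_succ, List.ofFn_succ, List.prod_cons, List.prod_cons,
      ih (fun k => f k.succ), smul_mul_smul_comm, ← pow_succ']

section HeckeLemmas

variable (n r : ℕ) (q : R) (v : Fin r → R)

lemma heckeRelZero (a : FreeAlgebra R (Fin n)) (h : heckeRel R n r q v a 0) :
    RingQuot.mkAlgHom R (heckeRel R n r q v) a = 0 := by
  have := RingQuot.mkAlgHom_rel R h
  simpa using this

lemma TgenProdZero :
    (List.ofFn fun k : Fin r =>
      Tgen R n r q v 0 - algebraMap R (Hecke R n r q v) (v k)).prod = 0 := by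
  have h := heckeRelZero R n r q v _ ⟨rfl, Or.inl rfl⟩
  erw [← h]; rw [map_list_prod, List.map_ofFn]
  refine congrArg List.prod (congrArg List.ofFn (funext fun k => ?_))
  simp [Function.comp, Tgen, fconst, map_sub, AlgHom.commutes]
  rfl

lemma Tz2 (i : ℕ) (h1 : 1 ≤ i) (h2 : i ≤ n - 1) :
    (Tgen R n r q v i - algebraMap R (Hecke R n r q v) q) * (Tgen R n r q v i + 1) = 0 := by
  have h := heckeRelZero R n r q v _ ⟨rfl, Or.inr (Or.inl ⟨i, h1, h2, rfl⟩)⟩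
  erw [← h]
  simp [Tgen, fconst, map_mul, map_sub, map_add, map_one, AlgHom.commutes]
  rfl

lemma Tz3 :
    Tgen R n r q v 0 * Tgen R n r q v 1 * Tgen R n r q v 0 * Tgen R n r q v 1
      = Tgen R n r q v 1 * Tgen R n r q v 0 * Tgen R n r q v 1 * Tgen R n r q v 0 := by
  have h := heckeRelZero R n r q v _ ⟨rfl, Or.inr (Or.inr (Or.inl rfl))⟩
  rw [map_sub] at h
  have := sub_eq_zero.mp h
  simp only [map_mul] at this; simp only [Tgen]; exact this

lemma Tz4 (i : ℕ) (h1 : 1 ≤ i) (h2 : i + 1 ≤ n - 1) :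
    Tgen R n r q v i * Tgen R n r q v (i + 1) * Tgen R n r q v i
      = Tgen R n r q v (i + 1) * Tgen R n r q v i * Tgen R n r q v (i + 1) := by
  have h := heckeRelZero R n r q v _
    ⟨rfl, Or.inr (Or.inr (Or.inr (Or.inl ⟨i, h1, h2, rfl⟩)))⟩
  rw [map_sub] at h
  have := sub_eq_zero.mp h
  simp only [map_mul] at this; simp only [Tgen]; exact this

lemma Tz5 (i j : ℕ) (h1 : j ≤ n - 1) (h2 : i + 2 ≤ j) :
    Tgen R n r q v i * Tgen R n r q v j = Tgen R n r q v j * Tgen R n r q v i := by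
  have h := heckeRelZero R n r q v _
    ⟨rfl, Or.inr (Or.inr (Or.inr (Or.inr ⟨i, j, h1, h2, rfl⟩)))⟩
  rw [map_sub] at h
  have := sub_eq_zero.mp h
  simp only [map_mul] at this; simp only [Tgen]; exact this

lemma prodGenAeval (x : Hecke R n r q v) (w : Fin r → R) :
    (List.ofFn fun k : Fin r => x - algebraMap R (Hecke R n r q v) (w k)).prod
      = Polynomial.aeval x (∏ k : Fin r, (X - C (w k))) := by
  rw [← List.prod_ofFn (f := fun k : Fin r => (X : R[X]) - C (w k)), map_list_prod,
    List.map_ofFn]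
  refine congrArg List.prod (congrArg List.ofFn (funext fun k => ?_))
  simp [Function.comp, map_sub, aeval_X, aeval_C]

lemma smulProdZero (u u' : R) (hz : u * u' = 1)
    (hpoly : ∏ k : Fin r, (X - C (u' * v k)) = ∏ k : Fin r, (X - C (v k))) :
    (List.ofFn fun k : Fin r =>
      u • Tgen R n r q v 0 - algebraMap R (Hecke R n r q v) (v k)).prod = 0 := by
  have step : ∀ k : Fin r,
      u • Tgen R n r q v 0 - algebraMap R (Hecke R n r q v) (v k)
        = u • (Tgen R n r q v 0 - algebraMap R (Hecke R n r q v) (u' * v k)) := by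
    intro k
    rw [smul_sub]
    congr 1
    rw [Algebra.smul_def, ← map_mul, ← mul_assoc, hz, one_mul]
  simp_rw [step]
  rw [listSmulProd, prodGenAeval, hpoly, ← prodGenAeval, TgenProdZero, smul_zero]

noncomputable def sigAux (u : R) : FreeAlgebra R (Fin n) →ₐ[R] Hecke R n r q v :=
  FreeAlgebra.lift R fun i : Fin n => (if (i : ℕ) = 0 then u else 1) • Tgen R n r q v i

lemma sigAux_fgen (u : R) (i : ℕ) :
    sigAux R n r q v u (fgen R n i) = (if i = 0 then u else 1) • Tgen R n r q v i := by
  unfold fgen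
  by_cases h : i < n
  · rw [dif_pos h]
    simp [sigAux, FreeAlgebra.lift_ι_apply]
  · rw [dif_neg h]
    have : Tgen R n r q v i = 0 := by
      unfold Tgen fgen
      rw [dif_neg h, map_zero]
      rfl
    rw [map_zero, this, smul_zero]

lemma sigAuxRel (u : R)
    (h0 : (List.ofFn fun k : Fin r =>
      u • Tgen R n r q v 0 - algebraMap R (Hecke R n r q v) (v k)).prod = 0) :
    ∀ ⦃a b⦄, heckeRel R n r q v a b → sigAux R n r q v u a = sigAux R n r q v u b := by
  rintro a b ⟨rfl, h⟩
  rw [map_zero]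
  rcases h with h | ⟨i, h1, h2, h⟩ | h | ⟨i, h1, h2, h⟩ | ⟨i, j, h1, h2, h⟩ <;> subst h
  · rw [map_list_prod, List.map_ofFn]
    have he : (⇑(sigAux R n r q v u) ∘ fun k : Fin r => fgen R n 0 - fconst R n (v k))
        = fun k : Fin r => u • Tgen R n r q v 0
            - algebraMap R (Hecke R n r q v) (v k) := by
      funext k
      simp [Function.comp, map_sub, sigAux_fgen, fconst, AlgHom.commutes]
    rw [he, h0]
  · have hi : ¬ (i = 0) := by omega
    rw [map_mul, map_sub, map_add, map_one, sigAux_fgen, if_neg hi, one_smul]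
    have : sigAux R n r q v u (fconst R n q) = algebraMap R (Hecke R n r q v) q := by
      simp [fconst, AlgHom.commutes]
    rw [this]
    exact Tz2 R n r q v i h1 h2
  · simp only [map_sub, map_mul, sigAux_fgen, if_pos rfl, if_neg one_ne_zero, one_smul,
      smul_mul_assoc, mul_smul_comm, smul_smul]
    rw [Tz3 R n r q v, sub_self]
  · have hi : ¬ (i = 0) := by omega
    have hi1 : ¬ (i + 1 = 0) := by omega
    simp only [map_sub, map_mul, sigAux_fgen, if_neg hi, if_neg hi1, one_smul]
    rw [Tz4 R n r q v i h1 h2, sub_self]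
  · have hj : ¬ (j = 0) := by omega
    simp only [map_sub, map_mul, sigAux_fgen, if_neg hj, one_smul,
      smul_mul_assoc, mul_smul_comm]
    rw [Tz5 R n r q v i j h1 h2, sub_self]

noncomputable def sigHom (u : R)
    (h0 : (List.ofFn fun k : Fin r =>
      u • Tgen R n r q v 0 - algebraMap R (Hecke R n r q v) (v k)).prod = 0) :
    Hecke R n r q v →ₐ[R] Hecke R n r q v :=
  RingQuot.liftAlgHom R ⟨sigAux R n r q v u, sigAuxRel R n r q v u h0⟩

lemma sigHom_Tgen (u : R) (h0) (i : ℕ) :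
    sigHom R n r q v u h0 (Tgen R n r q v i)
      = (if i = 0 then u else 1) • Tgen R n r q v i := by
  rw [← sigAux_fgen R n r q v u i]
  exact RingQuot.liftAlgHom_mkAlgHom_apply R (sigAux R n r q v u)
    (sigAuxRel R n r q v u h0) (fgen R n i)

lemma heckeHomExt {A : Type*} [Semiring A] [Algebra R A]
    {f g : Hecke R n r q v →ₐ[R] A}
    (h : ∀ i : ℕ, i < n → f (Tgen R n r q v i) = g (Tgen R n r q v i)) : f = g := by
  have hc : f.comp (RingQuot.mkAlgHom R (heckeRel R n r q v))
      = g.comp (RingQuot.mkAlgHom R (heckeRel R n r q v)) := by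
    refine FreeAlgebra.hom_ext (funext fun i => ?_)
    have hι : FreeAlgebra.ι R i = fgen R n (i : ℕ) := by
      simp [fgen, i.isLt]
    simp only [Function.comp_apply, AlgHom.comp_apply, hι]
    exact h i i.isLt
  ext x
  obtain ⟨a, rfl⟩ := RingQuot.mkAlgHom_surjective R (heckeRel R n r q v) x
  have := DFunLike.congr_fun hc a
  exact this

lemma heckeEquivExt (τ σ : Hecke R n r q v ≃ₐ[R] Hecke R n r q v)
    (h : ∀ i : ℕ, i < n → τ (Tgen R n r q v i) = σ (Tgen R n r q v i)) : τ = σ := by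
  have hc : (τ : Hecke R n r q v →ₐ[R] Hecke R n r q v) = σ :=
    heckeHomExt R n r q v (fun i hi => by simpa using h i hi)
  refine AlgEquiv.ext fun x => ?_
  have := DFunLike.congr_fun hc x
  simpa using this

end HeckeLemmas

/-- if `q, v₁, …, v_r` are units, `ζ^p = 1` and the multiset of
parameters is invariant under multiplication by `ζ` (i.e.
`∏ (X − ζ v_k) = ∏ (X − v_k)` in `R[X]`), then there is a unique `R`-algebra
automorphism `σ` of `H(r,1,n)` with `σ(T_0) = ζ T_0` and `σ(T_i) = T_i` for
`1 ≤ i ≤ n−1`, and it satisfies `σ^p = 1`. -/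
theorem hecke_sigma_exists_unique
    (n r p : ℕ) (hn : 2 ≤ n) (hr : 1 ≤ r) (hp : 1 ≤ p)
    (q : R) (hq : IsUnit q) (ζ : R) (hζ : ζ ^ p = 1)
    (v : Fin r → R) (hv : ∀ k, IsUnit (v k))
    (hinv : ∏ k : Fin r, (Polynomial.X - Polynomial.C (ζ * v k))
          = ∏ k : Fin r, (Polynomial.X - Polynomial.C (v k))) :
    ∃ σ : Hecke R n r q v ≃ₐ[R] Hecke R n r q v,
      (σ (Tgen R n r q v 0) = ζ • Tgen R n r q v 0) ∧
      (∀ i : ℕ, 1 ≤ i → i ≤ n - 1 → σ (Tgen R n r q v i) = Tgen R n r q v i) ∧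
      σ ^ p = 1 ∧
      (∀ τ : Hecke R n r q v ≃ₐ[R] Hecke R n r q v,
        (τ (Tgen R n r q v 0) = ζ • Tgen R n r q v 0) →
        (∀ i : ℕ, 1 ≤ i → i ≤ n - 1 → τ (Tgen R n r q v i) = Tgen R n r q v i) →
        τ = σ) := by
  have hp1 : p - 1 + 1 = p := by omega
  have hzz : ζ * ζ ^ (p - 1) = 1 := by
    rw [← pow_succ', hp1, hζ]
  have hzz' : ζ ^ (p - 1) * ζ = 1 := by rw [mul_comm]; exact hzz
  have hpoly1 : ∏ k : Fin r, (X - C (ζ ^ (p - 1) * v k))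
      = ∏ k : Fin r, (X - C (v k)) :=
    heckePolyInv R r ζ (ζ ^ (p - 1)) hzz v hinv (p - 1)
  have h0f := smulProdZero R n r q v ζ (ζ ^ (p - 1)) hzz hpoly1
  have h0b := smulProdZero R n r q v (ζ ^ (p - 1)) ζ hzz' hinv
  set F := sigHom R n r q v ζ h0f with hF
  set G := sigHom R n r q v (ζ ^ (p - 1)) h0b with hG
  have hFT : ∀ i : ℕ, F (Tgen R n r q v i)
      = (if i = 0 then ζ else 1) • Tgen R n r q v i := fun i =>
    sigHom_Tgen R n r q v ζ h0f i
  have hGT : ∀ i : ℕ, G (Tgen R n r q v i)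
      = (if i = 0 then ζ ^ (p - 1) else 1) • Tgen R n r q v i := fun i =>
    sigHom_Tgen R n r q v (ζ ^ (p - 1)) h0b i
  have hFG : F.comp G = AlgHom.id R (Hecke R n r q v) := by
    refine heckeHomExt R n r q v (fun i _ => ?_)
    rw [AlgHom.comp_apply, hGT, map_smul, hFT, AlgHom.id_apply, smul_smul]
    by_cases h : i = 0
    · rw [if_pos h, if_pos h, hzz', one_smul]
    · rw [if_neg h, if_neg h, one_mul, one_smul]
  have hGF : G.comp F = AlgHom.id R (Hecke R n r q v) := by
    refine heckeHomExt R n r q v (fun i _ => ?_)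
    rw [AlgHom.comp_apply, hFT, map_smul, hGT, AlgHom.id_apply, smul_smul]
    by_cases h : i = 0
    · rw [if_pos h, if_pos h, hzz, one_smul]
    · rw [if_neg h, if_neg h, one_mul, one_smul]
  refine ⟨AlgEquiv.ofAlgHom F G hFG hGF, ?_, ?_, ?_, ?_⟩
  · show F (Tgen R n r q v 0) = _
    rw [hFT, if_pos rfl]
  · intro i h1 _
    show F (Tgen R n r q v i) = _
    rw [hFT, if_neg (by omega), one_smul]
  · set σ := AlgEquiv.ofAlgHom F G hFG hGF with hσ
    have hσT : ∀ i : ℕ, σ (Tgen R n r q v i)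
        = (if i = 0 then ζ else 1) • Tgen R n r q v i := fun i => hFT i
    have claim : ∀ (m : ℕ) (i : ℕ), (σ ^ m) (Tgen R n r q v i)
        = ((if i = 0 then ζ else 1) ^ m) • Tgen R n r q v i := by
      intro m
      induction m with
      | zero => intro i; simp
      | succ m ih =>
        intro i
        rw [pow_succ, AlgEquiv.mul_apply, hσT, map_smul, ih, smul_smul, ← pow_succ']
    refine heckeEquivExt R n r q v _ _ (fun i _ => ?_)
    rw [claim p i]
    have h1 : (if i = 0 then ζ else 1 : R) ^ p = 1 := by
      split <;> simp [hζ]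
    rw [h1, one_smul]
    simp
  · intro τ hτ0 hτi
    refine heckeEquivExt R n r q v τ _ (fun i hi => ?_)
    show τ (Tgen R n r q v i) = F (Tgen R n r q v i)
    rw [hFT]
    by_cases h : i = 0
    · subst h; rw [if_pos rfl]; exact hτ0
    · rw [if_neg h, one_smul]; exact hτi i (by omega) (by omega)
end

section
/- The relation ⊴ is a partial order on P_n: it is reflexive, antisymmetric, and transitive. -/
/-- The total order on boxes `(i,l)`: `(i,l) ≤ (i',l')` iff `l < l'`, or `l = l'`
and `i ≤ i'`. -/
def bLE {p d : ℕ} (b b' : Fin p × Fin d) : Prop :=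
  b.2 < b'.2 ∨ (b.2 = b'.2 ∧ b.1 ≤ b'.1)

/-- The strict version of the total order on boxes. -/
def bLT {p d : ℕ} (b b' : Fin p × Fin d) : Prop :=
  b.2 < b'.2 ∨ (b.2 = b'.2 ∧ b.1 < b'.1)

/-- The partial order `≤'` on boxes: `(i,l) ≤' (i',l')` iff `l < l'` or
`(i,l) = (i',l')`. -/
def bLE' {p d : ℕ} (b b' : Fin p × Fin d) : Prop :=
  b.2 < b'.2 ∨ b = b'

/-- A 3D multipartition of `n` with at most two nonempty components: either a
single column of `n` nodes on a box, or two columns of sizes `c₁ ≥ 1` and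
`n - c₁ ≥ 1` on boxes `b₁ < b₂` (in the total order). -/
inductive MP (p d n : ℕ) : Type where
  | single (b : Fin p × Fin d) : MP p d n
  | double (b₁ b₂ : Fin p × Fin d) (c₁ : ℕ)
      (hlt : bLT b₁ b₂) (hc1 : 1 ≤ c₁) (hc2 : c₁ < n) : MP p d n

/-- The dominance-type relation on multipartitions associated to a relation `rB`
on boxes; with `rB = bLE` this is `⊴` and with `rB = bLE'` this is `⊴'`.
For doubles, `a = c₁ - c₂ = 2c₁ - n`. -/
def dom {p d n : ℕ} (rB : (Fin p × Fin d) → (Fin p × Fin d) → Prop) :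
    MP p d n → MP p d n → Prop
  | .single b₁, .single b₂ => rB b₁ b₂
  | .single _, .double _ _ _ _ _ _ => False
  | .double b₁ _ _ _ _ _, .single b₃ => rB b₁ b₃
  | .double b₁ b₂ c _ _ _, .double b₃ b₄ c' _ _ _ =>
      rB b₁ b₃ ∧ rB b₂ b₄ ∧
      (|2 * (c : ℤ) - n| < |2 * (c' : ℤ) - n| ∨
       (|2 * (c : ℤ) - n| = |2 * (c' : ℤ) - n| ∧ 2 * (c : ℤ) - n ≥ 2 * (c' : ℤ) - n) ∨
       (|2 * (c : ℤ) - n| = |2 * (c' : ℤ) - n| ∧ 2 * (c : ℤ) - n < 2 * (c' : ℤ) - n ∧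
        rB b₂ b₃))

lemma bLE_refl {p d : ℕ} (b : Fin p × Fin d) : bLE b b := Or.inr ⟨rfl, le_rfl⟩

lemma bLE_trans {p d : ℕ} {a b c : Fin p × Fin d} (h : bLE a b) (g : bLE b c) :
    bLE a c := by
  rcases h with h | ⟨h1, h2⟩ <;> rcases g with g | ⟨g1, g2⟩
  · exact Or.inl (lt_trans h g)
  · exact Or.inl (g1 ▸ h)
  · exact Or.inl (h1 ▸ g)
  · exact Or.inr ⟨h1.trans g1, h2.trans g2⟩

lemma bLE_antisymm {p d : ℕ} {a b : Fin p × Fin d} (h : bLE a b) (g : bLE b a) :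
    a = b := by
  rcases h with h | ⟨h1, h2⟩ <;> rcases g with g | ⟨g1, g2⟩
  · exact absurd (lt_trans h g) (lt_irrefl _)
  · exact absurd (g1 ▸ h) (lt_irrefl _)
  · exact absurd (h1 ▸ g) (lt_irrefl _)
  · exact Prod.ext (le_antisymm h2 g2) h1

lemma bLT_bLE_false {p d : ℕ} {a b : Fin p × Fin d} (h : bLT a b) (g : bLE b a) :
    False := by
  rcases h with h | ⟨h1, h2⟩ <;> rcases g with g | ⟨g1, g2⟩
  · exact absurd (lt_trans h g) (lt_irrefl _)
  · exact absurd (g1 ▸ h) (lt_irrefl _)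
  · exact absurd (h1 ▸ g) (lt_irrefl _)
  · exact absurd (lt_of_lt_of_le h2 g2) (lt_irrefl _)

lemma key_antisymm {A B : ℤ} {P Q : Prop} (hP : ¬P) (hQ : ¬Q)
    (h1 : |A| < |B| ∨ (|A| = |B| ∧ A ≥ B) ∨ (|A| = |B| ∧ A < B ∧ P))
    (h2 : |B| < |A| ∨ (|B| = |A| ∧ B ≥ A) ∨ (|B| = |A| ∧ B < A ∧ Q)) : A = B := by
  simp only [Int.abs_eq_natAbs] at h1 h2
  rcases h1 with h | ⟨h, h'⟩ | ⟨h, h', p⟩ <;> rcases h2 with g | ⟨g, g'⟩ | ⟨g, g', q⟩ <;>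
    first
      | omega
      | exact absurd p hP
      | exact absurd q hQ

lemma key_trans {A B C : ℤ} {P Q R : Prop} (hP : P → R) (hQ : Q → R)
    (h1 : |A| < |B| ∨ (|A| = |B| ∧ A ≥ B) ∨ (|A| = |B| ∧ A < B ∧ P))
    (h2 : |B| < |C| ∨ (|B| = |C| ∧ B ≥ C) ∨ (|B| = |C| ∧ B < C ∧ Q)) :
    |A| < |C| ∨ (|A| = |C| ∧ A ≥ C) ∨ (|A| = |C| ∧ A < C ∧ R) := by
  simp only [Int.abs_eq_natAbs] at *
  rcases h1 with h | ⟨h, h'⟩ | ⟨h, h', p⟩ <;> rcases h2 with g | ⟨g, g'⟩ | ⟨g, g', q⟩ <;>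
    rcases le_or_gt C A with t | t <;>
      first
        | (left; omega)
        | (right; left; constructor <;> omega)
        | (right; right; exact ⟨by omega, t, hP p⟩)
        | (right; right; exact ⟨by omega, t, hQ q⟩)

/-- the relation `⊴` is a partial order on `P_n`. -/
theorem dom_bLE_isPartialOrder (p d n : ℕ) (hp : 1 ≤ p) (hd : 1 ≤ d) (hn : 1 ≤ n) :
    (∀ l : MP p d n, dom bLE l l) ∧
    (∀ l m : MP p d n, dom bLE l m → dom bLE m l → l = m) ∧
    (∀ l m k : MP p d n, dom bLE l m → dom bLE m k → dom bLE l k) := by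
  refine ⟨?_, ?_, ?_⟩
  · intro l
    cases l with
    | single b => exact bLE_refl b
    | double b₁ b₂ c hlt hc1 hc2 =>
        exact ⟨bLE_refl b₁, bLE_refl b₂, Or.inr (Or.inl ⟨rfl, le_rfl⟩)⟩
  · intro l m h g
    cases l with
    | single b₁ =>
        cases m with
        | single b₂ =>
            simp only [dom] at h g
            exact congrArg MP.single (bLE_antisymm h g)
        | double b₃ b₄ c' hlt' hc1' hc2' => exact absurd h (by simp [dom])
    | double b₁ b₂ c hlt hc1 hc2 =>
        cases m with
        | single b₃ => exact absurd g (by simp [dom])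
        | double b₃ b₄ c' hlt' hc1' hc2' =>
            simp only [dom] at h g
            obtain ⟨h13, h24, harith⟩ := h
            obtain ⟨g31, g42, garith⟩ := g
            have e13 : b₁ = b₃ := bLE_antisymm h13 g31
            have e24 : b₂ = b₄ := bLE_antisymm h24 g42
            subst e13; subst e24
            have hnP : ¬ bLE b₂ b₁ := fun hh => bLT_bLE_false hlt hh
            have ec : (c : ℤ) = (c' : ℤ) := by
              have := key_antisymm hnP hnP harith garith
              omega
            have ec' : c = c' := by exact_mod_cast ec
            subst ec'
            rfl
  · intro l m k h g
    cases l with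
    | single b₁ =>
        cases m with
        | single b₂ =>
            cases k with
            | single b₃ =>
                simp only [dom] at *
                exact bLE_trans h g
            | double _ _ _ _ _ _ => exact absurd g (by simp [dom])
        | double _ _ _ _ _ _ => exact absurd h (by simp [dom])
    | double b₁ b₂ c hlt hc1 hc2 =>
        cases m with
        | single b₃ =>
            cases k with
            | single b₅ =>
                simp only [dom] at *
                exact bLE_trans h g
            | double _ _ _ _ _ _ => exact absurd g (by simp [dom])
        | double b₃ b₄ c' hlt' hc1' hc2' =>
            cases k with
            | single b₅ =>
                simp only [dom] at *
                exact bLE_trans h.1 g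
            | double b₅ b₆ c'' hlt'' hc1'' hc2'' =>
                simp only [dom] at *
                obtain ⟨h13, h24, harith⟩ := h
                obtain ⟨g35, g46, garith⟩ := g
                refine ⟨bLE_trans h13 g35, bLE_trans h24 g46, ?_⟩
                exact key_trans (fun hh => bLE_trans hh g35)
                  (fun hh => bLE_trans h24 hh) harith garith
end

section
/- The relation ⊴' is a partial order on P_n: it is reflexive, antisymmetric, and transitive. -/
lemma bLE'_refl {p d : ℕ} (b : Fin p × Fin d) : bLE' b b := Or.inr rfl

lemma bLE'_trans {p d : ℕ} {a b c : Fin p × Fin d} (h : bLE' a b) (h' : bLE' b c) :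
    bLE' a c := by
  rcases h with h | rfl
  · rcases h' with h' | rfl
    · exact Or.inl (h.trans h')
    · exact Or.inl h
  · exact h'

lemma bLE'_antisymm {p d : ℕ} {a b : Fin p × Fin d} (h : bLE' a b) (h' : bLE' b a) :
    a = b := by
  rcases h with h | rfl
  · rcases h' with h' | rfl
    · exact absurd (h.trans h') (lt_irrefl _)
    · rfl
  · rfl

lemma bLT_not_bLE' {p d : ℕ} {a b : Fin p × Fin d} (h : bLT a b) (h' : bLE' b a) :
    False := by
  rcases h with h | ⟨he, hi⟩
  · rcases h' with h' | rfl
    · exact absurd (h.trans h') (lt_irrefl _)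
    · exact absurd h (lt_irrefl _)
  · rcases h' with h' | rfl
    · rw [he] at h'; exact absurd h' (lt_irrefl _)
    · exact absurd hi (lt_irrefl _)

/-- the relation `⊴'` is a partial order on `P_n`. -/
theorem dom_bLE'_isPartialOrder (p d n : ℕ) (hp : 1 ≤ p) (hd : 1 ≤ d) (hn : 1 ≤ n) :
    (∀ l : MP p d n, dom bLE' l l) ∧
    (∀ l m : MP p d n, dom bLE' l m → dom bLE' m l → l = m) ∧
    (∀ l m k : MP p d n, dom bLE' l m → dom bLE' m k → dom bLE' l k) := by
  refine ⟨?_, ?_, ?_⟩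
  · intro l
    cases l with
    | single b => exact bLE'_refl b
    | double b₁ b₂ c hlt hc1 hc2 =>
        exact ⟨bLE'_refl _, bLE'_refl _, Or.inr (Or.inl ⟨rfl, le_refl _⟩)⟩
  · intro l m h h'
    cases l with
    | single b₁ =>
        cases m with
        | single b₂ => exact congrArg _ (bLE'_antisymm h h')
        | double b₃ b₄ c' hlt' hc1' hc2' => exact absurd h (by simp [dom])
    | double b₁ b₂ c hlt hc1 hc2 =>
        cases m with
        | single b₃ => exact absurd h' (by simp [dom])
        | double b₃ b₄ c' hlt' hc1' hc2' =>
            obtain ⟨h1, h2, h3⟩ := h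
            obtain ⟨h4, h5, h6⟩ := h'
            obtain rfl : b₁ = b₃ := bLE'_antisymm h1 h4
            obtain rfl : b₂ = b₄ := bLE'_antisymm h2 h5
            obtain rfl : c = c' := by
              rcases h3 with h3 | ⟨h3, h3'⟩ | ⟨h3, h3', h3''⟩
              · rcases h6 with h6 | ⟨h6, _⟩ | ⟨h6, _, _⟩ <;> omega
              · rcases h6 with h6 | ⟨h6, h6'⟩ | ⟨h6, h6', h6''⟩
                · omega
                · omega
                · exact absurd h6'' (fun hh => bLT_not_bLE' hlt hh)
              · exact absurd h3'' (fun hh => bLT_not_bLE' hlt hh)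
            rfl
  · intro l m k h h'
    cases l with
    | single b₁ =>
        cases m with
        | single b₂ =>
            cases k with
            | single b₃ => exact bLE'_trans h h'
            | double _ _ _ _ _ _ => exact absurd h' (by simp [dom])
        | double _ _ _ _ _ _ => exact absurd h (by simp [dom])
    | double b₁ b₂ c hlt hc1 hc2 =>
        cases m with
        | single b₃ =>
            cases k with
            | single b₅ => exact bLE'_trans h h'
            | double _ _ _ _ _ _ => exact absurd h' (by simp [dom])
        | double b₃ b₄ c' hlt' hc1' hc2' =>
            obtain ⟨h1, h2, h3⟩ := h
            cases k with
            | single b₅ => exact bLE'_trans h1 h'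
            | double b₅ b₆ c'' hlt'' hc1'' hc2'' =>
                obtain ⟨h4, h5, h6⟩ := h'
                refine ⟨bLE'_trans h1 h4, bLE'_trans h2 h5, ?_⟩
                have hb24 : bLE' b₂ b₄ := h2
                have hb35 : bLE' b₃ b₅ := h4
                have A1 := abs_choice (2 * (c : ℤ) - n)
                have A2 := abs_choice (2 * (c' : ℤ) - n)
                have A3 := abs_choice (2 * (c'' : ℤ) - n)
                have B1 := abs_nonneg (2 * (c : ℤ) - n)
                have B2 := abs_nonneg (2 * (c' : ℤ) - n)
                have B3 := abs_nonneg (2 * (c'' : ℤ) - n)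
                rcases h3 with h3 | ⟨h3, h3'⟩ | ⟨h3, h3', h3''⟩
                · rcases h6 with h6 | ⟨h6, h6'⟩ | ⟨h6, h6', h6''⟩ <;>
                    exact Or.inl (by omega)
                · rcases h6 with h6 | ⟨h6, h6'⟩ | ⟨h6, h6', h6''⟩
                  · exact Or.inl (by omega)
                  · exact Or.inr (Or.inl ⟨by omega, by omega⟩)
                  · by_cases hge : 2 * (c : ℤ) - n ≥ 2 * (c'' : ℤ) - n
                    · exact Or.inr (Or.inl ⟨by omega, hge⟩)
                    · exact Or.inr (Or.inr ⟨by omega, by omega,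
                        bLE'_trans h2 h6''⟩)
                · rcases h6 with h6 | ⟨h6, h6'⟩ | ⟨h6, h6', h6''⟩
                  · exact Or.inl (by omega)
                  · by_cases hge : 2 * (c : ℤ) - n ≥ 2 * (c'' : ℤ) - n
                    · exact Or.inr (Or.inl ⟨by omega, hge⟩)
                    · exact Or.inr (Or.inr ⟨by omega, by omega,
                        bLE'_trans h3'' h4⟩)
                  · exact Or.inr (Or.inr ⟨by omega, by omega,
                        bLE'_trans h3'' h4⟩)
end

section
/- Let S ⊆ P_n be the set of multipartitions which are single shapes or double shapes whose two boxes lie in different rows of the floor table (l₁ ≠ l₂). Then the shift map σ restricts to a bijection of S onto itself, and for all λ, μ ∈ S one has λ ⊴' μ if and only if σ(λ) ⊴' σ(μ); that is, σ is a poset automorphism of (S, ⊴'). -/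
instance {p d : ℕ} (b b' : Fin p × Fin d) : Decidable (bLT b b') := by
  unfold bLT; infer_instance

/-- Cyclic shift of a box one column to the left. -/
def shiftBox {p d : ℕ} [NeZero p] (b : Fin p × Fin d) : Fin p × Fin d :=
  (b.1 - 1, b.2)

/-- The shift map `σ` on multipartitions: each component is moved one column to
the left (cyclically); for a double shape the two resulting boxes are re-listed
in increasing total order. -/
def shiftMP {p d n : ℕ} [NeZero p] : MP p d n → MP p d n
  | .single b => .single (shiftBox b)
  | .double b₁ b₂ c₁ hlt hc1 hc2 =>
      if h : bLT (shiftBox b₁) (shiftBox b₂) then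
        .double (shiftBox b₁) (shiftBox b₂) c₁ h hc1 hc2
      else
        .double (shiftBox b₂) (shiftBox b₁) (n - c₁)
          (by
            rcases hlt with hl | ⟨hl, hi⟩
            · exact absurd (Or.inl hl) h
            · refine Or.inr ⟨hl.symm, ?_⟩
              have hne : b₂.1 - 1 ≠ b₁.1 - 1 := by
                intro hEq
                exact absurd (congrArg (· + 1) hEq) (by
                  simpa [sub_add_cancel] using (ne_of_lt hi).symm)
              have : ¬ (b₁.1 - 1 < b₂.1 - 1) := by
                intro hlt'
                exact h (Or.inr ⟨hl, hlt'⟩)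
              exact lt_of_le_of_ne (not_lt.mp this) hne)
          (by omega) (by omega)

/-- The set `S` of multipartitions which are single shapes or double shapes whose
two boxes lie in different rows of the floor table. -/
def rowSep {p d n : ℕ} : Set (MP p d n) :=
  {l | match l with
    | .single _ => True
    | .double b₁ b₂ _ _ _ _ => b₁.2 ≠ b₂.2}

lemma shiftBox_snd {p d : ℕ} [NeZero p] (b : Fin p × Fin d) :
    (shiftBox b).2 = b.2 := rfl

lemma shiftBox_inj {p d : ℕ} [NeZero p] :
    Function.Injective (shiftBox : Fin p × Fin d → Fin p × Fin d) := by
  intro a b h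
  have h1 : a.1 - 1 = b.1 - 1 := congrArg Prod.fst h
  have h2 : a.2 = b.2 := congrArg (fun x => x.2) h
  have h3 : a.1 = b.1 := by
    have := congrArg (· + 1) h1
    simpa [sub_add_cancel] using this
  exact Prod.ext h3 h2

lemma bLE'_shift {p d : ℕ} [NeZero p] (a b : Fin p × Fin d) :
    bLE' (shiftBox a) (shiftBox b) ↔ bLE' a b := by
  unfold bLE'
  rw [shiftBox_snd, shiftBox_snd]
  constructor
  · rintro (h | h)
    · exact Or.inl h
    · exact Or.inr (shiftBox_inj h)
  · rintro (h | h)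
    · exact Or.inl h
    · exact Or.inr (by rw [h])

lemma bLT_of_rowSep {p d : ℕ} {b₁ b₂ : Fin p × Fin d} (h : bLT b₁ b₂)
    (hne : b₁.2 ≠ b₂.2) : b₁.2 < b₂.2 := by
  rcases h with h | ⟨h, _⟩
  · exact h
  · exact absurd h hne

lemma shiftMP_double_eq {p d n : ℕ} [NeZero p] (b₁ b₂ : Fin p × Fin d)
    (c : ℕ) (hlt : bLT b₁ b₂) (h1 : 1 ≤ c) (h2 : c < n) (hne : b₁.2 ≠ b₂.2) :
    shiftMP (MP.double b₁ b₂ c hlt h1 h2 : MP p d n) =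
      MP.double (shiftBox b₁) (shiftBox b₂) c
        (Or.inl (by rw [shiftBox_snd, shiftBox_snd]; exact bLT_of_rowSep hlt hne))
        h1 h2 := by
  simp only [shiftMP]
  rw [dif_pos]
  exact Or.inl (by rw [shiftBox_snd, shiftBox_snd]; exact bLT_of_rowSep hlt hne)

lemma doubleCongr {p d n : ℕ} {b₁ b₂ b₃ b₄ : Fin p × Fin d} {c c' : ℕ}
    {hlt : bLT b₁ b₂} {h1 : 1 ≤ c} {h2 : c < n} {hlt' : bLT b₃ b₄}
    {h1' : 1 ≤ c'} {h2' : c' < n} (e1 : b₁ = b₃) (e2 : b₂ = b₄) (e3 : c = c') :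
    (MP.double b₁ b₂ c hlt h1 h2 : MP p d n) = MP.double b₃ b₄ c' hlt' h1' h2' := by
  subst e1; subst e2; subst e3; rfl

lemma unshift_shift {p d : ℕ} [NeZero p] (b : Fin p × Fin d) :
    shiftBox (b.1 + 1, b.2) = b := by
  unfold shiftBox
  simp

/-- the shift map `σ` restricts to a bijection of `S` onto itself
and is a poset automorphism of `(S, ⊴')`. -/
theorem shiftMP_posetAut_on_rowSep (p d n : ℕ) [NeZero p] (hp : 1 ≤ p)
    (hd : 1 ≤ d) (hn : 1 ≤ n) :
    Set.BijOn (shiftMP : MP p d n → MP p d n) rowSep rowSep ∧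
    (∀ l ∈ (rowSep : Set (MP p d n)), ∀ m ∈ (rowSep : Set (MP p d n)),
      (dom bLE' l m ↔ dom bLE' (shiftMP l) (shiftMP m))) := by
  constructor
  · refine ⟨?_, ?_, ?_⟩
    · -- MapsTo
      rintro (b | ⟨b₁, b₂, c, hlt, h1, h2⟩) hl
      · exact trivial
      · have hne : b₁.2 ≠ b₂.2 := hl
        rw [shiftMP_double_eq b₁ b₂ c hlt h1 h2 hne]
        show (shiftBox b₁).2 ≠ (shiftBox b₂).2
        rw [shiftBox_snd, shiftBox_snd]; exact hne
    · -- InjOn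
      rintro (b | ⟨b₁, b₂, c, hlt, h1, h2⟩) hl (b' | ⟨b₃, b₄, c', hlt', h1', h2'⟩) hm h
      · simp only [shiftMP] at h
        injection h with h
        rw [shiftBox_inj h]
      · have hne : b₃.2 ≠ b₄.2 := hm
        rw [shiftMP_double_eq b₃ b₄ c' hlt' h1' h2' hne] at h
        simp only [shiftMP] at h
        exact absurd h (by simp)
      · have hne : b₁.2 ≠ b₂.2 := hl
        rw [shiftMP_double_eq b₁ b₂ c hlt h1 h2 hne] at h
        simp only [shiftMP] at h
        exact absurd h (by simp)
      · have hne : b₁.2 ≠ b₂.2 := hl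
        have hne' : b₃.2 ≠ b₄.2 := hm
        rw [shiftMP_double_eq b₁ b₂ c hlt h1 h2 hne,
          shiftMP_double_eq b₃ b₄ c' hlt' h1' h2' hne'] at h
        injection h with e1 e2 e3
        exact doubleCongr (shiftBox_inj e1) (shiftBox_inj e2) e3
    · -- SurjOn
      rintro (b | ⟨b₁, b₂, c, hlt, h1, h2⟩) hm
      · exact ⟨MP.single (b.1 + 1, b.2), trivial, by
          simp only [shiftMP, unshift_shift]⟩
      · have hne : b₁.2 ≠ b₂.2 := hm
        have hrow : b₁.2 < b₂.2 := bLT_of_rowSep hlt hne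
        refine ⟨MP.double (b₁.1 + 1, b₁.2) (b₂.1 + 1, b₂.2) c (Or.inl hrow) h1 h2,
          ?_, ?_⟩
        · exact fun h => hne h
        · have hlt'' : bLT (shiftBox ((b₁.1 + 1, b₁.2) : Fin p × Fin d))
              (shiftBox (b₂.1 + 1, b₂.2)) := by
            rw [unshift_shift, unshift_shift]; exact hlt
          simp only [shiftMP]
          rw [dif_pos hlt'']
          exact doubleCongr (unshift_shift b₁) (unshift_shift b₂) rfl
  · -- order iso
    rintro (b | ⟨b₁, b₂, c, hlt, h1, h2⟩) hl (b' | ⟨b₃, b₄, c', hlt', h1', h2'⟩) hm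
    · simp only [shiftMP, dom]
      exact (bLE'_shift b b').symm
    · have hne' : b₃.2 ≠ b₄.2 := hm
      rw [shiftMP_double_eq b₃ b₄ c' hlt' h1' h2' hne']
      simp only [shiftMP, dom]
    · have hne : b₁.2 ≠ b₂.2 := hl
      rw [shiftMP_double_eq b₁ b₂ c hlt h1 h2 hne]
      simp only [shiftMP, dom]
      exact (bLE'_shift b₁ b').symm
    · have hne : b₁.2 ≠ b₂.2 := hl
      have hne' : b₃.2 ≠ b₄.2 := hm
      rw [shiftMP_double_eq b₁ b₂ c hlt h1 h2 hne,
        shiftMP_double_eq b₃ b₄ c' hlt' h1' h2' hne']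
      simp only [dom, bLE'_shift]
end
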